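/- Let K be a convex body with 0 in its interior, r_0 and r_1 the minimum and maximum of the radial function over the unit sphere, and t > 0. Then for every unit vector u, ρ(K + tB^n, u) ≤ ρ(K, u) + (r_1/r_0)·t. -/

import Mathlib

open MeasureTheory Filter
open scoped RealInnerProductSpace Topology Pointwise

noncomputable def polarBody {n : ℕ} (K : Set (EuclideanSpace ℝ (Fin n))) :
    Set (EuclideanSpace ℝ (Fin n)) :=
  {x | ∀ y ∈ K, ⟪x, y⟫ ≤ 1}

noncomputable def suppFn {n : ℕ} (K : Set (EuclideanSpace ℝ (Fin n)))
    (u : EuclideanSpace ℝ (Fin n)) : ℝ :=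
  sSup ((fun x => ⟪u, x⟫) '' K)

noncomputable def radFn {n : ℕ} (K : Set (EuclideanSpace ℝ (Fin n)))
    (u : EuclideanSpace ℝ (Fin n)) : ℝ :=
  sSup {r : ℝ | 0 ≤ r ∧ r • u ∈ K}

theorem rad_add_ball_le {n : ℕ} (K : Set (EuclideanSpace ℝ (Fin n)))
    (hK : IsCompact K) (hconv : Convex ℝ K)
    (h0 : (0 : EuclideanSpace ℝ (Fin n)) ∈ interior K)
    (r₀ r₁ : ℝ)
    (hr₀ : r₀ = sInf (radFn K '' Metric.sphere (0 : EuclideanSpace ℝ (Fin n)) 1))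
    (hr₁ : r₁ = sSup (radFn K '' Metric.sphere (0 : EuclideanSpace ℝ (Fin n)) 1))
    (t : ℝ) (ht : 0 < t)
    (u : EuclideanSpace ℝ (Fin n)) (hu : ‖u‖ = 1) :
    radFn (K + Metric.closedBall (0 : EuclideanSpace ℝ (Fin n)) t) u ≤
      radFn K u + (r₁ / r₀) * t := by
  have hKcl : IsClosed K := hK.isClosed
  have h0K : (0 : EuclideanSpace ℝ (Fin n)) ∈ K := interior_subset h0
  obtain ⟨R, hR⟩ := hK.isBounded.exists_norm_le
  have hSsub : ∀ v : EuclideanSpace ℝ (Fin n), ‖v‖ = 1 →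
      ∀ r ∈ {r : ℝ | 0 ≤ r ∧ r • v ∈ K}, r ≤ R := by
    intro v hv r hr
    have := hR _ hr.2
    rwa [norm_smul, hv, mul_one, Real.norm_of_nonneg hr.1] at this
  have hSbdd : ∀ v : EuclideanSpace ℝ (Fin n), ‖v‖ = 1 →
      BddAbove {r : ℝ | 0 ≤ r ∧ r • v ∈ K} := fun v hv => ⟨R, fun r hr => hSsub v hv r hr⟩
  have hS0 : ∀ v : EuclideanSpace ℝ (Fin n), (0 : ℝ) ∈ {r : ℝ | 0 ≤ r ∧ r • v ∈ K} := by
    intro v; exact ⟨le_refl 0, by simpa using h0K⟩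
  have hrad_nonneg : ∀ v : EuclideanSpace ℝ (Fin n), ‖v‖ = 1 → 0 ≤ radFn K v :=
    fun v hv => le_csSup (hSbdd v hv) (hS0 v)
  have hrad_le_R : ∀ v : EuclideanSpace ℝ (Fin n), ‖v‖ = 1 → radFn K v ≤ R :=
    fun v hv => csSup_le ⟨0, hS0 v⟩ (hSsub v hv)
  have hrad_mem : ∀ v : EuclideanSpace ℝ (Fin n), ‖v‖ = 1 → radFn K v • v ∈ K := by
    intro v hv
    have hScl : IsClosed {r : ℝ | 0 ≤ r ∧ r • v ∈ K} := by
      have h1 : IsClosed {r : ℝ | 0 ≤ r} := isClosed_Ici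
      have h2 : IsClosed ((fun r : ℝ => r • v) ⁻¹' K) :=
        hKcl.preimage (continuous_id.smul continuous_const)
      exact h1.inter h2
    exact (hScl.csSup_mem ⟨0, hS0 v⟩ (hSbdd v hv)).2
  -- lower bound on radFn via interior ball
  obtain ⟨ε, hε, hballε⟩ := Metric.isOpen_iff.mp isOpen_interior 0 h0
  have hεrad : ∀ v : EuclideanSpace ℝ (Fin n), ‖v‖ = 1 → ε / 2 ≤ radFn K v := by
    intro v hv
    apply le_csSup (hSbdd v hv)
    refine ⟨by positivity, interior_subset (hballε ?_)⟩
    simp only [Metric.mem_ball, dist_zero_right, norm_smul, hv, mul_one,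
      Real.norm_of_nonneg (by positivity : (0:ℝ) ≤ ε / 2)]
    linarith
  have husphere : u ∈ Metric.sphere (0 : EuclideanSpace ℝ (Fin n)) 1 := by
    simp [hu]
  have himg_ne : (radFn K '' Metric.sphere (0 : EuclideanSpace ℝ (Fin n)) 1).Nonempty :=
    ⟨radFn K u, u, husphere, rfl⟩
  have hr₀pos : 0 < r₀ := by
    rw [hr₀]
    refine lt_of_lt_of_le (by positivity : (0:ℝ) < ε / 2) (le_csInf himg_ne ?_)
    rintro x ⟨v, hv, rfl⟩
    exact hεrad v (by simpa using hv)
  have hr₀le : r₀ ≤ radFn K u := by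
    rw [hr₀]
    exact csInf_le ⟨0, by rintro x ⟨v, hv, rfl⟩; exact hrad_nonneg v (by simpa using hv)⟩
      ⟨u, husphere, rfl⟩
  have hKu_le_r₁ : radFn K u ≤ r₁ := by
    rw [hr₁]
    exact le_csSup ⟨R, by rintro x ⟨v, hv, rfl⟩; exact hrad_le_R v (by simpa using hv)⟩
      ⟨u, husphere, rfl⟩
  -- closed ball of radius r₀ is inside K
  have hballK : ∀ w : EuclideanSpace ℝ (Fin n), ‖w‖ ≤ r₀ → w ∈ K := by
    intro w hw
    rcases eq_or_ne w 0 with rfl | hw0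
    · exact h0K
    · have hnw : 0 < ‖w‖ := norm_pos_iff.mpr hw0
      set v : EuclideanSpace ℝ (Fin n) := ‖w‖⁻¹ • w with hvdef
      have hv : ‖v‖ = 1 := by
        rw [hvdef, norm_smul, Real.norm_of_nonneg (by positivity), inv_mul_cancel₀ hnw.ne']
      have hρ : 0 < radFn K v := lt_of_lt_of_le hr₀pos (by
        rw [hr₀]
        exact csInf_le ⟨0, by rintro x ⟨v', hv', rfl⟩; exact hrad_nonneg v' (by simpa using hv')⟩
          ⟨v, by simp [hv], rfl⟩)
      have hmem := hrad_mem v hv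
      have hcoef : ‖w‖ / radFn K v ≤ 1 := by
        rw [div_le_one hρ]
        calc ‖w‖ ≤ r₀ := hw
          _ ≤ radFn K v := by
            rw [hr₀]
            exact csInf_le ⟨0, by rintro x ⟨v', hv', rfl⟩; exact hrad_nonneg v' (by simpa using hv')⟩
              ⟨v, by simp [hv], rfl⟩
      have := hconv.smul_mem_of_zero_mem h0K hmem
        ⟨div_nonneg hnw.le hρ.le, hcoef⟩
      have heq : (‖w‖ / radFn K v) • (radFn K v • v) = w := by
        rw [smul_smul, div_mul_cancel₀ _ hρ.ne', hvdef, smul_smul,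
          mul_inv_cancel₀ hnw.ne', one_smul]
      rwa [heq] at this
  -- main argument
  set s : ℝ := t / r₀ with hsdef
  have hs : 0 < s := div_pos ht hr₀pos
  have hbound_nonneg : 0 ≤ radFn K u + r₁ / r₀ * t := by
    have h1 : 0 ≤ radFn K u := hrad_nonneg u hu
    have h2 : 0 ≤ r₁ := le_trans h1 hKu_le_r₁
    have : 0 ≤ r₁ / r₀ * t := by positivity
    linarith
  apply Real.sSup_le _ hbound_nonneg
  rintro x ⟨hx0, hxmem⟩
  obtain ⟨y, hy, z, hz, hyz⟩ := Set.mem_add.mp hxmem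
  have hznorm : ‖z‖ ≤ t := by simpa [dist_zero_right] using hz
  have hk : (r₀ / t) • z ∈ K := by
    apply hballK
    rw [norm_smul, Real.norm_of_nonneg (by positivity)]
    calc r₀ / t * ‖z‖ ≤ r₀ / t * t := by
          apply mul_le_mul_of_nonneg_left hznorm (by positivity)
      _ = r₀ := div_mul_cancel₀ _ ht.ne'
  have h1s : (0:ℝ) < 1 + s := by linarith
  have key : (x / (1 + s)) • u ∈ K := by
    have heq : (x / (1 + s)) • u =
        (1 / (1 + s)) • y + (s / (1 + s)) • ((r₀ / t) • z) := by
      have hzz : (s / (1 + s)) • ((r₀ / t) • z) = (1 / (1 + s)) • z := by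
        rw [smul_smul]
        congr 1
        field_simp [hsdef]
        rw [hsdef]; field_simp
      rw [hzz, ← smul_add, hyz, smul_smul]
      congr 1
      field_simp
    rw [heq]
    apply hconv hy hk (by positivity) (by positivity)
    field_simp
  have hle : x / (1 + s) ≤ radFn K u :=
    le_csSup (hSbdd u hu) ⟨div_nonneg hx0 h1s.le, key⟩
  have hx_le : x ≤ (1 + s) * radFn K u := by
    rw [div_le_iff₀ h1s] at hle
    linarith [hle]
  calc x ≤ (1 + s) * radFn K u := hx_le
    _ = radFn K u + s * radFn K u := by ring
    _ ≤ radFn K u + s * r₁ := by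
        have := mul_le_mul_of_nonneg_left hKu_le_r₁ hs.le
        linarith
    _ = radFn K u + r₁ / r₀ * t := by
        rw [hsdef]; field_simp
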